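/- Let A be a symmetric bilinear form on an n-dimensional inner product space with metric g. If the map ω ↦ A∘ω + ω∘A (where ∘ denotes composition of the associated endomorphisms via g) sends every trace-free symmetric form ω to a multiple of ω, uniformly with one constant, then A = (tr_g A / n) g, provided n ≥ 2. -/

import Mathlib

/-- If the anticommutator map `ω ↦ A*ω + ω*A` (composition of the
associated endomorphisms, in an orthonormal basis) sends every trace-free symmetric
form `ω` to `λ • ω` with a single constant `λ`, then `A = (tr A / n) • g`, for `n ≥ 2`. -/
theorem stmt_4 (n : ℕ) (hn : 2 ≤ n) (A : Matrix (Fin n) (Fin n) ℝ) (hA : A.IsSymm)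
    (h : ∃ lam : ℝ, ∀ ω : Matrix (Fin n) (Fin n) ℝ, ω.IsSymm → ω.trace = 0 →
      A * ω + ω * A = lam • ω) :
    A = (A.trace / n) • (1 : Matrix (Fin n) (Fin n) ℝ) := by
  obtain ⟨lam, h⟩ := h
  have hsym : ∀ i j, A j i = A i j := fun i j => by
    conv_lhs => rw [← hA]
    rfl
  -- diagonal entries
  have hdiag : ∀ i j : Fin n, i ≠ j → A i i = lam / 2 := by
    intro i j hij
    have hω := h (Matrix.single i i 1 - Matrix.single j j 1) ?_ ?_
    · have := congrFun (congrFun hω i) i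
      simp [Matrix.mul_apply, Matrix.single, Matrix.sub_apply, Matrix.add_apply,
        Finset.sum_ite_eq, Finset.sum_ite_eq', hij, hij.symm] at this
      linarith
    · ext a b
      simp [Matrix.single, and_comm]
    · simp [Matrix.trace, Matrix.diag, Matrix.single]
  -- off-diagonal entries
  have hoff : ∀ i j : Fin n, i ≠ j → A i j = 0 := by
    intro i j hij
    have hω := h (Matrix.single i j 1 + Matrix.single j i 1) ?_ ?_
    · have := congrFun (congrFun hω i) i
      simp [Matrix.mul_apply, Matrix.single, Matrix.add_apply,
        Finset.sum_ite_eq, Finset.sum_ite_eq', hij, hij.symm] at this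
      have h2 := hsym i j
      linarith
    · ext a b
      simp only [Matrix.transpose_apply, Matrix.add_apply, Matrix.single, Matrix.of_apply]
      rw [add_comm]
      congr 2 <;> simp [and_comm]
    · rw [Matrix.trace]
      apply Finset.sum_eq_zero
      intro x _
      rcases eq_or_ne i x with rfl | hix
      · simp [Matrix.diag, Matrix.single, hij, Ne.symm hij]
      · simp [Matrix.diag, Matrix.single, hix]
  have hne : ∀ i : Fin n, ∃ j : Fin n, j ≠ i := by
    intro i
    have : 1 < Fintype.card (Fin n) := by simp; omega
    exact Fintype.exists_ne_of_one_lt_card this i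
  have hdiag' : ∀ i : Fin n, A i i = lam / 2 := by
    intro i
    obtain ⟨j, hj⟩ := hne i
    exact hdiag i j (Ne.symm hj)
  have htr : A.trace = n * (lam / 2) := by
    simp [Matrix.trace, Matrix.diag, hdiag', Finset.sum_const, mul_comm]
  have hn0 : (n : ℝ) ≠ 0 := by positivity
  ext i j
  by_cases hij : i = j
  · subst hij
    simp [hdiag' i, htr, Matrix.one_apply]
    field_simp
  · simp [hoff i j hij, Matrix.one_apply, hij]
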